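/- Let ω := e^{2πi/3}, Λ := ℤω + ℤ ⊂ ℂ, and Λ* := {γ ∈ ℂ : ⟨γ,λ⟩ ∈ 2πℤ for all λ ∈ Λ}. Let k ∈ Λ*. Then {u : ℂ → ℂ smooth, Λ-periodic, (2D_{z̄}+k)((2D_{z̄}+k)u) = 0} = {z ↦ c·e^{-i⟨z,k⟩} : c ∈ ℂ}; in particular this solution space is a one-dimensional ℂ-vector space spanned by z ↦ e^{-i⟨z,k⟩}. -/

import Mathlib

/-- `⟨z,w⟩ = Re (z·w̄)`. -/
noncomputable def ip (z w : ℂ) : ℝ := (z * (starRingEnd ℂ) w).re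

/-- `(2D_{z̄}f)(z) = (1/i)(∂_{x₁}f(z) + i∂_{x₂}f(z))`, identifying `ℂ ≅ ℝ²`. -/
noncomputable def Dbar2 (f : ℂ → ℂ) (z : ℂ) : ℂ :=
  Complex.I⁻¹ * (fderiv ℝ f z 1 + Complex.I * fderiv ℝ f z Complex.I)

noncomputable def omega : ℂ := Complex.exp (2 * Real.pi * Complex.I / 3)

/-- `Λ = ℤω ⊕ ℤ`. -/
noncomputable def Lambda : Set ℂ := {w | ∃ m n : ℤ, w = (m : ℂ) * omega + (n : ℂ)}

/-- The dual lattice `Λ* = {γ : ⟨γ,λ⟩ ∈ 2πℤ for all λ ∈ Λ}`. -/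
noncomputable def LambdaStar : Set ℂ :=
  {γ | ∀ l ∈ Lambda, ∃ n : ℤ, ip γ l = 2 * Real.pi * (n : ℝ)}

open Complex
open scoped ContDiff

lemma hle_top : (1 : WithTop ℕ∞) ≤ ((⊤ : ℕ∞) : WithTop ℕ∞) := by
  exact_mod_cast (le_top : (1 : ℕ∞) ≤ ⊤)

-- basic ip lemmas
lemma ip_comm (z w : ℂ) : ip z w = ip w z := by
  simp [ip, Complex.mul_re]; ring

lemma ip_add_left (z z' w : ℂ) : ip (z + z') w = ip z w + ip z' w := by
  simp [ip, add_mul]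

lemma ip_neg_right (z w : ℂ) : ip z (-w) = -ip z w := by
  simp [ip]

lemma ip_one_left (k : ℂ) : ip 1 k = k.re := by
  simp [ip]

lemma ip_I_left (k : ℂ) : ip Complex.I k = k.im := by
  simp [ip, Complex.mul_re]

-- the linear map z ↦ -(I * ip z k)
noncomputable def phiL (k : ℂ) : ℂ →L[ℝ] ℂ :=
  (-Complex.I) • (Complex.ofRealCLM.comp (Complex.reCLM.comp
    ((starRingEnd ℂ k) • (ContinuousLinearMap.id ℝ ℂ))))

lemma phiL_apply (k z : ℂ) : phiL k z = -(Complex.I * (ip z k : ℂ)) := by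
  simp [phiL, ip, smul_eq_mul, mul_comm]

noncomputable def Ek (k : ℂ) : ℂ → ℂ := fun z => Complex.exp (-(Complex.I * (ip z k : ℂ)))

lemma Ek_eq_exp_phiL (k : ℂ) : Ek k = fun z => Complex.exp (phiL k z) := by
  funext z; rw [phiL_apply]; rfl

lemma hasFDerivAt_Ek (k z : ℂ) : HasFDerivAt (Ek k) (Ek k z • phiL k) z := by
  rw [Ek_eq_exp_phiL]
  have h := ((phiL k).hasFDerivAt (x := z)).cexp
  simpa [Ek_eq_exp_phiL] using h

lemma Dbar2_of_hasFDerivAt {f : ℂ → ℂ} {L : ℂ →L[ℝ] ℂ} {z : ℂ} (h : HasFDerivAt f L z) :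
    Dbar2 f z = Complex.I⁻¹ * (L 1 + Complex.I * L Complex.I) := by
  rw [Dbar2, h.fderiv]

lemma Dbar2_Ek (k z : ℂ) : Dbar2 (Ek k) z = -k * Ek k z := by
  rw [Dbar2_of_hasFDerivAt (hasFDerivAt_Ek k z)]
  simp only [ContinuousLinearMap.smul_apply, phiL_apply, ip_one_left, ip_I_left, smul_eq_mul]
  have hk : (k.re : ℂ) + (k.im : ℂ) * Complex.I = k := Complex.re_add_im k
  have h2 : Complex.I ^ 2 = -1 := Complex.I_sq
  rw [Complex.inv_I]
  linear_combination (-(Ek k z)) * hk + (Ek k z * (k.re : ℂ) + Ek k z * (k.im : ℂ) * Complex.I) * h2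

lemma Dbar2_const (c z : ℂ) : Dbar2 (fun _ => c) z = 0 := by
  simp [Dbar2, fderiv_const]

lemma Dbar2_mul {f g : ℂ → ℂ} {z : ℂ} (hf : DifferentiableAt ℝ f z)
    (hg : DifferentiableAt ℝ g z) :
    Dbar2 (fun w => f w * g w) z = Dbar2 f z * g z + f z * Dbar2 g z := by
  have h : HasFDerivAt (fun w => f w * g w) (f z • fderiv ℝ g z + g z • fderiv ℝ f z) z :=
    hf.hasFDerivAt.mul hg.hasFDerivAt
  rw [Dbar2_of_hasFDerivAt h, Dbar2_of_hasFDerivAt hf.hasFDerivAt,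
    Dbar2_of_hasFDerivAt hg.hasFDerivAt]
  simp only [ContinuousLinearMap.add_apply, ContinuousLinearMap.smul_apply, smul_eq_mul]
  ring

lemma Dbar2_add {f g : ℂ → ℂ} {z : ℂ} (hf : DifferentiableAt ℝ f z)
    (hg : DifferentiableAt ℝ g z) :
    Dbar2 (fun w => f w + g w) z = Dbar2 f z + Dbar2 g z := by
  have h : HasFDerivAt (fun w => f w + g w) (fderiv ℝ f z + fderiv ℝ g z) z :=
    hf.hasFDerivAt.add hg.hasFDerivAt
  rw [Dbar2_of_hasFDerivAt h, Dbar2_of_hasFDerivAt hf.hasFDerivAt,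
    Dbar2_of_hasFDerivAt hg.hasFDerivAt]
  simp only [ContinuousLinearMap.add_apply]
  ring

lemma hasFDerivAt_conj (z : ℂ) :
    HasFDerivAt (fun w : ℂ => (starRingEnd ℂ) w)
      (Complex.conjCLE.toContinuousLinearMap : ℂ →L[ℝ] ℂ) z :=
  Complex.conjCLE.toContinuousLinearMap.hasFDerivAt

lemma Dbar2_conj (z : ℂ) : Dbar2 (fun w : ℂ => (starRingEnd ℂ) w) z = -2 * Complex.I := by
  rw [Dbar2_of_hasFDerivAt (hasFDerivAt_conj z), Complex.inv_I]
  have h2 : Complex.I ^ 2 = -1 := Complex.I_sq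
  simp only [ContinuousLinearEquiv.coe_coe, Complex.conjCLE_apply, map_one, Complex.conj_I]
  linear_combination Complex.I * h2

lemma clm_ext_complex {L M : ℂ →L[ℝ] ℂ} (h1 : L 1 = M 1) (hI : L Complex.I = M Complex.I) :
    L = M := by
  ext z
  have hz : z = z.re • (1 : ℂ) + z.im • Complex.I := by
    simp [Complex.real_smul, Complex.re_add_im]
  rw [hz, map_add, map_add, map_smul, map_smul, map_smul, map_smul, h1, hI]

lemma holo_of_dbar {f : ℂ → ℂ} (hf : Differentiable ℝ f) (h : ∀ z, Dbar2 f z = 0) :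
    Differentiable ℂ f := by
  intro z
  have hz := (hf z).hasFDerivAt
  set L := fderiv ℝ f z with hL
  have h0 : L 1 + Complex.I * L Complex.I = 0 := by
    have := h z
    rw [Dbar2] at this
    have hI : (Complex.I)⁻¹ ≠ 0 := by simp [Complex.I_ne_zero]
    exact (mul_eq_zero.mp this).resolve_left hI
  have hLI : L Complex.I = Complex.I * L 1 := by
    have h2 : Complex.I ^ 2 = -1 := Complex.I_sq
    linear_combination (-Complex.I) * h0 + (L Complex.I) * h2
  let M : ℂ →L[ℂ] ℂ := (L 1) • (ContinuousLinearMap.id ℂ ℂ)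
  have hM : M.restrictScalars ℝ = L := by
    apply clm_ext_complex
    · simp [M, smul_eq_mul]
    · simp [M, smul_eq_mul, hLI]; ring
  have hM' : HasFDerivAt f M z := hasFDerivAt_of_restrictScalars ℝ hz hM
  exact hM'.differentiableAt

lemma omega_eq : omega = Complex.exp ((2 * Real.pi / 3 : ℝ) * Complex.I) := by
  rw [omega]
  congr 1
  push_cast
  ring

lemma omega_re : omega.re = Real.cos (2 * Real.pi / 3) := by
  rw [omega_eq, Complex.exp_ofReal_mul_I_re]

lemma omega_im : omega.im = Real.sqrt 3 / 2 := by
  rw [omega_eq, Complex.exp_ofReal_mul_I_im]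
  have h : 2 * Real.pi / 3 = Real.pi - Real.pi / 3 := by ring
  rw [h, Real.sin_pi_sub, Real.sin_pi_div_three]

lemma omega_im_pos : 0 < omega.im := by
  rw [omega_im]
  positivity

lemma omega_im_le_one : omega.im ≤ 1 := by
  rw [omega_im]
  rw [div_le_one (by norm_num)]
  nlinarith [Real.sq_sqrt (by norm_num : (3:ℝ) ≥ 0), Real.sqrt_nonneg 3]

lemma lattice_covering (z : ℂ) : ∃ γ ∈ Lambda, ‖z - γ‖ ≤ 2 := by
  set m : ℤ := round (z.im / omega.im) with hm
  set n : ℤ := round ((z - (m : ℂ) * omega).re) with hn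
  refine ⟨(m : ℂ) * omega + (n : ℂ), ⟨m, n, rfl⟩, ?_⟩
  set w := z - ((m : ℂ) * omega + (n : ℂ)) with hw
  have him : |w.im| ≤ 1 := by
    have h1 : w.im = z.im - m * omega.im := by
      simp [hw, Complex.sub_im, Complex.add_im, Complex.mul_im]
    have h2 : |z.im / omega.im - m| ≤ 1 / 2 := abs_sub_round _
    have h3 : |z.im - m * omega.im| = omega.im * |z.im / omega.im - m| := by
      have h4 : omega.im * (z.im / omega.im - m) = z.im - m * omega.im := by
        have h0 : omega.im ≠ 0 := ne_of_gt omega_im_pos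
        rw [mul_sub, mul_comm omega.im (z.im / omega.im), div_mul_cancel₀ _ h0]
        ring
      rw [← h4, abs_mul, abs_of_pos omega_im_pos]
    rw [h1, h3]
    calc omega.im * |z.im / omega.im - m| ≤ 1 * (1/2) := by
          apply mul_le_mul omega_im_le_one h2 (abs_nonneg _) zero_le_one
      _ ≤ 1 := by norm_num
  have hre : |w.re| ≤ 1/2 := by
    have h1 : w.re = (z - (m : ℂ) * omega).re - n := by
      simp only [hw, Complex.sub_re, Complex.add_re, Complex.intCast_re]
      ring
    rw [h1]
    exact abs_sub_round _
  calc ‖w‖ ≤ |w.re| + |w.im| := Complex.norm_le_abs_re_add_abs_im w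
    _ ≤ 1/2 + 1 := add_le_add hre him
    _ ≤ 2 := by norm_num

lemma bounded_of_periodic {f : ℂ → ℂ} (hf : Continuous f)
    (hp : ∀ z : ℂ, ∀ γ ∈ Lambda, f (z + γ) = f z) :
    Bornology.IsBounded (Set.range f) := by
  have hsub : Set.range f ⊆ f '' (Metric.closedBall 0 2) := by
    rintro _ ⟨z, rfl⟩
    obtain ⟨γ, hγ, hab⟩ := lattice_covering z
    refine ⟨z - γ, ?_, ?_⟩
    · simpa [Metric.mem_closedBall, Complex.dist_eq] using hab
    · have := hp (z - γ) γ hγ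
      simpa using this.symm
  exact ((isCompact_closedBall (0:ℂ) 2).image hf).isBounded.subset hsub

lemma periodic_lattice_of_two {g : ℂ → ℂ} (h1 : ∀ z, g (z + 1) = g z)
    (hω : ∀ z, g (z + omega) = g z) : ∀ z : ℂ, ∀ γ ∈ Lambda, g (z + γ) = g z := by
  intro z γ hγ
  obtain ⟨m, n, rfl⟩ := hγ
  have p1 : Function.Periodic g 1 := h1
  have pω : Function.Periodic g omega := hω
  have pm : Function.Periodic g ((m : ℂ) * omega) := pω.int_mul m
  have pn : Function.Periodic g ((n : ℂ) * 1) := p1.int_mul n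
  have := (pm.add_period pn) z
  simpa [add_assoc] using this

lemma fderiv_translate {u : ℂ → ℂ} (hu : Differentiable ℝ u) (γ : ℂ)
    (hp : ∀ z : ℂ, u (z + γ) = u z) (z : ℂ) : fderiv ℝ u (z + γ) = fderiv ℝ u z := by
  have h1 : HasFDerivAt (fun w => u (w + γ)) (fderiv ℝ u (z + γ)) z := by
    have h2 := (hu (z + γ)).hasFDerivAt.comp z ((hasFDerivAt_id z).add_const γ)
    simp only [ContinuousLinearMap.comp_id] at h2
    exact h2
  have h3 : (fun w => u (w + γ)) = u := funext hp
  rw [h3] at h1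
  rw [← h1.fderiv]

lemma Dbar2_periodic {u : ℂ → ℂ} (hu : Differentiable ℝ u) (γ : ℂ)
    (hp : ∀ z : ℂ, u (z + γ) = u z) (z : ℂ) : Dbar2 u (z + γ) = Dbar2 u z := by
  rw [Dbar2, Dbar2, fderiv_translate hu γ hp]

lemma contDiff_Dbar2 {u : ℂ → ℂ} (hu : ContDiff ℝ (⊤ : ℕ∞) u) :
    ContDiff ℝ (⊤ : ℕ∞) (Dbar2 u) := by
  have hf : ContDiff ℝ (⊤ : ℕ∞) (fderiv ℝ u) := hu.fderiv_right le_rfl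
  have h1 : ContDiff ℝ (⊤ : ℕ∞) (fun z => fderiv ℝ u z 1) := hf.clm_apply contDiff_const
  have h2 : ContDiff ℝ (⊤ : ℕ∞) (fun z => fderiv ℝ u z Complex.I) := hf.clm_apply contDiff_const
  have : Dbar2 u = fun z => Complex.I⁻¹ * (fderiv ℝ u z 1 + Complex.I * fderiv ℝ u z Complex.I) :=
    rfl
  rw [this]
  exact contDiff_const.mul (h1.add (contDiff_const.mul h2))

lemma contDiff_Ek (k : ℂ) : ContDiff ℝ (⊤ : ℕ∞) (Ek k) := by
  rw [Ek_eq_exp_phiL]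
  exact (phiL k).contDiff.cexp

lemma Ek_mul_Ek_neg (k z : ℂ) : Ek k z * Ek (-k) z = 1 := by
  rw [Ek, Ek, ← Complex.exp_add, ip_neg_right]
  push_cast
  rw [show -(Complex.I * (ip z k : ℂ)) + -(Complex.I * -(ip z k : ℂ)) = 0 by ring]
  exact Complex.exp_zero

lemma Ek_periodic' {k γ : ℂ} (h : ∃ n : ℤ, ip γ k = 2 * Real.pi * (n : ℝ)) (z : ℂ) :
    Ek k (z + γ) = Ek k z := by
  obtain ⟨n, hn⟩ := h
  rw [Ek, Ek, ip_add_left, hn]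
  push_cast
  rw [mul_add, neg_add, Complex.exp_add]
  have h1 : Complex.exp (-(Complex.I * (2 * (Real.pi : ℂ) * (n : ℂ)))) = 1 := by
    rw [show -(Complex.I * (2 * (Real.pi : ℂ) * (n : ℂ)))
        = ((-n : ℤ) : ℂ) * (2 * (Real.pi : ℂ) * Complex.I) by push_cast; ring]
    exact Complex.exp_int_mul_two_pi_mul_I (-n)
  rw [h1, mul_one]

lemma deriv_shift_periodic {G : ℂ → ℂ} {c a : ℂ} (h : ∀ z, G (z + c) = G z + a) (z : ℂ) :
    deriv G (z + c) = deriv G z := by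
  have hfun : (fun x => G (x + c)) = fun x => G x + a := funext h
  have e1 : deriv (fun x => G (x + c)) z = deriv G (z + c) := deriv_comp_add_const G c z
  have e2 : deriv (fun x : ℂ => G x + a) z = deriv G z := deriv_add_const a
  rw [← e1, hfun, e2]

/-- for `k ∈ Λ*`, the smooth `Λ`-periodic kernel of `(2D_{z̄}+k)²` is exactly
the one-dimensional space `ℂ · e^{-i⟨z,k⟩}`. -/
theorem kernel_on_dual_lattice
    (k : ℂ) (hk : k ∈ LambdaStar) :
    {u : ℂ → ℂ | ContDiff ℝ (⊤ : ℕ∞) u ∧ (∀ z : ℂ, ∀ γ ∈ Lambda, u (z + γ) = u z) ∧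
        ∀ z : ℂ, Dbar2 (fun w => Dbar2 u w + k * u w) z + k * (Dbar2 u z + k * u z) = 0}
      = {u : ℂ → ℂ | ∃ c : ℂ, u = fun z => c * Complex.exp (-(Complex.I * (ip z k : ℂ)))} := by
  have hdual : ∀ γ ∈ Lambda, ∃ n : ℤ, ip γ k = 2 * Real.pi * (n : ℝ) := by
    intro γ hγ
    obtain ⟨n, hn⟩ := hk γ hγ
    exact ⟨n, by rw [ip_comm]; exact hn⟩
  have hdualneg : ∀ γ ∈ Lambda, ∃ n : ℤ, ip γ (-k) = 2 * Real.pi * (n : ℝ) := by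
    intro γ hγ
    obtain ⟨n, hn⟩ := hdual γ hγ
    exact ⟨-n, by rw [ip_neg_right, hn]; push_cast; ring⟩
  have hone : (1 : ℂ) ∈ Lambda := ⟨0, 1, by simp⟩
  have homega : omega ∈ Lambda := ⟨1, 0, by simp⟩
  ext u
  simp only [Set.mem_setOf_eq]
  constructor
  · rintro ⟨hsm, hper, hpde⟩
    have hud : Differentiable ℝ u := hsm.differentiable (by simp)
    have hDu_smooth : ContDiff ℝ (⊤ : ℕ∞) (Dbar2 u) := contDiff_Dbar2 hsm
    have hw_smooth : ContDiff ℝ (⊤ : ℕ∞) (fun z => Dbar2 u z + k * u z) :=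
      hDu_smooth.add (contDiff_const.mul hsm)
    have hwd : Differentiable ℝ (fun z => Dbar2 u z + k * u z) :=
      hw_smooth.differentiable (by simp)
    have hEkd : ∀ κ : ℂ, Differentiable ℝ (Ek κ) := fun κ => (contDiff_Ek κ).differentiable (by simp)
    set F : ℂ → ℂ := fun z => Ek (-k) z * (Dbar2 u z + k * u z) with hFdef
    have hF_smooth : ContDiff ℝ (⊤ : ℕ∞) F := (contDiff_Ek (-k)).mul hw_smooth
    have hFd : Differentiable ℝ F := hF_smooth.differentiable (by simp)
    have hdbarF : ∀ z, Dbar2 F z = 0 := by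
      intro z
      rw [hFdef, Dbar2_mul (hEkd (-k) z) (hwd z), Dbar2_Ek]
      have h := hpde z
      linear_combination Ek (-k) z * h
    have hFhol : Differentiable ℂ F := holo_of_dbar hFd hdbarF
    have hFper : ∀ z : ℂ, ∀ γ ∈ Lambda, F (z + γ) = F z := by
      intro z γ hγ
      simp only [hFdef]
      rw [Ek_periodic' (hdualneg γ hγ), Dbar2_periodic hud γ (fun z => hper z γ hγ),
        hper z γ hγ]
    have hFbd : Bornology.IsBounded (Set.range F) :=
      bounded_of_periodic hF_smooth.continuous hFper
    have hFc : ∀ z, F z = F 0 := fun z => hFhol.apply_eq_apply_of_bounded hFbd z 0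
    set a : ℂ := F 0 * (2 * Complex.I)⁻¹ with ha
    set v : ℂ → ℂ := fun z => Ek (-k) z * u z with hvdef
    have hvd : Differentiable ℝ v := (hEkd (-k)).mul hud
    have hDv : ∀ z, Dbar2 v z = F z := by
      intro z
      rw [hvdef, Dbar2_mul (hEkd (-k) z) (hud z), Dbar2_Ek, hFdef]
      ring
    have hconjd : Differentiable ℝ (fun z : ℂ => (starRingEnd ℂ) z) :=
      fun z => (hasFDerivAt_conj z).differentiableAt
    have hacd : Differentiable ℝ (fun z : ℂ => a * (starRingEnd ℂ) z) :=
      (differentiable_const a).mul hconjd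
    set G : ℂ → ℂ := fun z => v z + a * (starRingEnd ℂ) z with hGdef
    have hGd : Differentiable ℝ G := hvd.add hacd
    have h2I : (2 * Complex.I) ≠ 0 := by simp [Complex.I_ne_zero]
    have hdbarG : ∀ z, Dbar2 G z = 0 := by
      intro z
      rw [hGdef, Dbar2_add (hvd z) (hacd z), hDv z, hFc z,
        Dbar2_mul (differentiableAt_const a) (hconjd z), Dbar2_const, Dbar2_conj, ha]
      field_simp
      ring
    have hGhol : Differentiable ℂ G := holo_of_dbar hGd hdbarG
    have hvper : ∀ z : ℂ, ∀ γ ∈ Lambda, v (z + γ) = v z := by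
      intro z γ hγ
      simp only [hvdef]
      rw [Ek_periodic' (hdualneg γ hγ), hper z γ hγ]
    have hG1 : ∀ z, G (z + 1) = G z + a := by
      intro z
      simp only [hGdef, map_add, map_one]
      rw [hvper z 1 hone]
      ring
    have hGω : ∀ z, G (z + omega) = G z + a * (starRingEnd ℂ) omega := by
      intro z
      simp only [hGdef, map_add]
      rw [hvper z omega homega]
      ring
    have hdG_per : ∀ z : ℂ, ∀ γ ∈ Lambda, deriv G (z + γ) = deriv G z :=
      periodic_lattice_of_two (deriv_shift_periodic hG1) (deriv_shift_periodic hGω)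
    have hG_inf : ContDiff ℂ ∞ G := hGhol.contDiff
    have hone_le : (1 : WithTop ℕ∞) ≤ ∞ := hle_top
    have hdG : Differentiable ℂ (deriv G) :=
      (contDiff_infty_iff_deriv.mp hG_inf).2.differentiable (by simp)
    have hdG_cont : Continuous (deriv G) := hG_inf.continuous_deriv hone_le
    have hdGbd : Bornology.IsBounded (Set.range (deriv G)) :=
      bounded_of_periodic hdG_cont hdG_per
    set b : ℂ := deriv G 0 with hb
    have hdGc : ∀ z, deriv G z = b := fun z => hdG.apply_eq_apply_of_bounded hdGbd z 0
    set H : ℂ → ℂ := fun z => G z - b * z with hHdef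
    have hHd : Differentiable ℂ H := hGhol.sub (differentiable_id.const_mul b)
    have hHderiv : ∀ z, deriv H z = 0 := by
      intro z
      have hbz : HasDerivAt (fun w : ℂ => b * w) b z := by
        simpa using (hasDerivAt_id z).const_mul b
      rw [hHdef, deriv_fun_sub (hGhol z) hbz.differentiableAt, hdGc z, hbz.deriv, sub_self]
    have hGlin : ∀ z, G z = b * z + G 0 := by
      intro z
      have h0 := is_const_of_deriv_eq_zero hHd hHderiv z 0
      simp only [hHdef] at h0
      linear_combination h0
    have hveq : ∀ z, v z = b * z + G 0 - a * (starRingEnd ℂ) z := by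
      intro z
      have hvz : v z = G z - a * (starRingEnd ℂ) z := by
        simp only [hGdef]; ring
      rw [hvz, hGlin z]
    have e1 : b = a := by
      have h1 : v (0 + 1) = v 0 := hvper 0 1 hone
      rw [hveq (0 + 1), hveq 0] at h1
      simp only [zero_add, map_one, map_zero, mul_one, mul_zero] at h1
      linear_combination h1
    have e2 : b * omega = a * (starRingEnd ℂ) omega := by
      have h1 : v (0 + omega) = v 0 := hvper 0 omega homega
      rw [hveq (0 + omega), hveq 0] at h1
      simp only [zero_add, map_zero, mul_zero] at h1
      linear_combination h1
    have ha0 : a = 0 := by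
      have h3 : a * (omega - (starRingEnd ℂ) omega) = 0 := by
        rw [mul_sub]
        linear_combination e2 - omega * e1
      rcases mul_eq_zero.mp h3 with h | h
      · exact h
      · exfalso
        rw [Complex.sub_conj] at h
        have him : omega.im ≠ 0 := ne_of_gt omega_im_pos
        simp [Complex.ext_iff, Complex.I_ne_zero, him] at h
    have hb0 : b = 0 := by rw [e1, ha0]
    refine ⟨G 0, ?_⟩
    funext z
    have hv0 : v z = G 0 := by
      rw [hveq z, ha0, hb0]
      ring
    have hmul := congrArg (fun t => Ek k z * t) hv0
    simp only [hvdef] at hmul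
    rw [← mul_assoc, Ek_mul_Ek_neg, one_mul] at hmul
    rw [hmul]
    show Ek k z * G 0 = G 0 * Ek k z
    ring
  · rintro ⟨c, rfl⟩
    have hEk_diff : Differentiable ℝ (Ek k) := (contDiff_Ek k).differentiable (by simp)
    have hD : ∀ w : ℂ, Dbar2 (fun z => c * Complex.exp (-(Complex.I * (ip z k : ℂ)))) w
        = c * (-k * Ek k w) := by
      intro w
      have hfe : (fun z => c * Complex.exp (-(Complex.I * (ip z k : ℂ))))
          = fun z => c * Ek k z := rfl
      rw [hfe, Dbar2_mul (differentiableAt_const c) (hEk_diff w), Dbar2_const, Dbar2_Ek]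
      ring
    refine ⟨contDiff_const.mul (contDiff_Ek k), ?_, ?_⟩
    · intro z γ hγ
      exact congrArg (c * ·) (Ek_periodic' (hdual γ hγ) z)
    · intro z
      have hfun : (fun w => Dbar2 (fun z => c * Complex.exp (-(Complex.I * (ip z k : ℂ)))) w
          + k * (c * Complex.exp (-(Complex.I * (ip w k : ℂ))))) = fun _ => (0 : ℂ) := by
        funext w
        rw [hD w]
        show c * (-k * Ek k w) + k * (c * Ek k w) = 0
        ring
      rw [hfun, Dbar2_const 0 z, hD z]
      show (0 : ℂ) + k * (c * (-k * Ek k z) + k * (c * Ek k z)) = 0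
      ring
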